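/- Let C be an essentially small abelian category and 𝒢 a cogenerator of C. The assignments H ↦ f(H) := {A ∈ C : [A] ∈ H} and S ↦ g(S) := the subgroup of K0(C) generated by {[A] : A ∈ S} are mutually inverse bijections between the set of subgroups of K0(C) containing H_𝒢 and the set of dense complete full subcategories of C containing 𝒢. -/

import Mathlib

/-!
Grothendieck groups of essentially small abelian categories.

`K0 C` is the quotient of the free abelian group on the isomorphism classes of objects
of `C` by the subgroup generated by the Euler relations `⟨A⟩ - ⟨B⟩ + ⟨C⟩` coming from
short exact sequences `0 ⟶ A ⟶ B ⟶ C ⟶ 0`; `K0.mk C A` is the class `[A]`.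
A full subcategory (identified with its set of objects) is *dense* if every object of `C`
is a direct summand of an object of the subcategory, and *complete* if whenever two of
the three objects of a short exact sequence lie in it, so does the third.
A *generator* (resp. *cogenerator*) is a full additive subcategory `𝒢` such that every
object `A` fits in a short exact sequence `0 ⟶ A' ⟶ G ⟶ A ⟶ 0`
(resp. `0 ⟶ A ⟶ G ⟶ A' ⟶ 0`) with `G ∈ 𝒢`.
-/

open CategoryTheory CategoryTheory.Limits ZeroObject

universe w v u

namespace AbK0

variable (C : Type u) [Category.{v} C] [Abelian C]

/-- `IsSES f g` says that `0 ⟶ A ⟶ B ⟶ D ⟶ 0` given by `f : A ⟶ B` and `g : B ⟶ D`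
is a short exact sequence. -/
def IsSES {A B D : C} (f : A ⟶ B) (g : B ⟶ D) : Prop :=
  ∃ w : f ≫ g = 0, (ShortComplex.mk f g w).ShortExact

/-- The isomorphism class of an object. -/
def isoCl (A : C) : Quotient (isIsomorphicSetoid C) := Quotient.mk (isIsomorphicSetoid C) A

/-- The subgroup of Euler relations coming from short exact sequences. -/
def K0Rels : AddSubgroup (FreeAbelianGroup (Quotient (isIsomorphicSetoid C))) :=
  AddSubgroup.closure
    { x | ∃ S : ShortComplex C, S.ShortExact ∧
        x = FreeAbelianGroup.of (isoCl C S.X₁) - FreeAbelianGroup.of (isoCl C S.X₂)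
          + FreeAbelianGroup.of (isoCl C S.X₃) }

/-- The Grothendieck group of the abelian category `C`. -/
def K0 : Type u := FreeAbelianGroup (Quotient (isIsomorphicSetoid C)) ⧸ K0Rels C

noncomputable instance : AddCommGroup (K0 C) :=
  QuotientAddGroup.Quotient.addCommGroup _

/-- The class `[A]` of an object `A` in the Grothendieck group. -/
def K0.mk (A : C) : K0 C := QuotientAddGroup.mk (FreeAbelianGroup.of (isoCl C A))

/-- A full subcategory is dense if every object of `C` is a direct summand of an object
of the subcategory. -/
noncomputable def DenseSub (S : Set C) : Prop :=
  ∀ A : C, ∃ X ∈ S, ∃ A' : C, Nonempty (X ≅ A ⊞ A')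

/-- A full subcategory is complete if, in any short exact sequence, whenever two of the
three objects belong to the subcategory, so does the third. -/
def CompleteSub (S : Set C) : Prop :=
  ∀ ⦃A B D : C⦄ (f : A ⟶ B) (g : B ⟶ D), IsSES C f g →
    ((A ∈ S → B ∈ S → D ∈ S) ∧ (A ∈ S → D ∈ S → B ∈ S) ∧ (B ∈ S → D ∈ S → A ∈ S))

/-- A full additive subcategory: it contains a zero object and is closed under
binary direct sums. -/
noncomputable def AdditiveSub (G : Set C) : Prop :=
  (0 : C) ∈ G ∧ ∀ A B : C, A ∈ G → B ∈ G → (A ⊞ B) ∈ G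

/-- `𝒢` is a generator of `C`: a full additive subcategory such that every object `A`
admits a short exact sequence `0 ⟶ A' ⟶ G ⟶ A ⟶ 0` with `G ∈ 𝒢`. -/
noncomputable def IsGenerator (G : Set C) : Prop :=
  AdditiveSub C G ∧
    ∀ A : C, ∃ (A' Gb : C) (f : A' ⟶ Gb) (g : Gb ⟶ A), Gb ∈ G ∧ IsSES C f g

/-- `𝒢` is a cogenerator of `C`: a full additive subcategory such that every object `A`
admits a short exact sequence `0 ⟶ A ⟶ G ⟶ A' ⟶ 0` with `G ∈ 𝒢`. -/
noncomputable def IsCogenerator (G : Set C) : Prop :=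
  AdditiveSub C G ∧
    ∀ A : C, ∃ (Gb A' : C) (f : A ⟶ Gb) (g : Gb ⟶ A'), Gb ∈ G ∧ IsSES C f g

end AbK0

open AbK0


namespace AbK0

section Helpers

variable {C : Type u} [Category.{v} C] [Abelian C]

theorem isSES_of_splitting {A B D : C} {f : A ⟶ B} {g : B ⟶ D} (w : f ≫ g = 0)
    (s : (ShortComplex.mk f g w).Splitting) : IsSES C f g :=
  ⟨w, s.shortExact⟩

theorem isSES_inl_snd (A B : C) :
    IsSES C (biprod.inl : A ⟶ A ⊞ B) (biprod.snd : A ⊞ B ⟶ B) :=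
  isSES_of_splitting (by simp)
    { r := biprod.fst
      s := biprod.inr
      f_r := by simp
      s_g := by simp
      id := biprod.total }

theorem isSES_id_zero (R : C) : IsSES C (𝟙 R) (0 : R ⟶ 0) :=
  isSES_of_splitting (by simp)
    { r := 𝟙 R
      s := 0
      f_r := by simp
      s_g := (isZero_zero C).eq_of_src _ _
      id := by simp }

theorem isSES_zero_iso {A B : C} (e : A ≅ B) : IsSES C (0 : (0 : C) ⟶ A) e.hom :=
  isSES_of_splitting (zero_comp)
    { r := 0
      s := e.inv
      f_r := (isZero_zero C).eq_of_src _ _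
      s_g := e.inv_hom_id
      id := by simp }

theorem isSES_of_iso {A B D A' B' D' : C} {f : A ⟶ B} {g : B ⟶ D} (h : IsSES C f g)
    (eA : A ≅ A') (eB : B ≅ B') (eD : D ≅ D') :
    IsSES C (eA.inv ≫ f ≫ eB.hom) (eB.inv ≫ g ≫ eD.hom) := by
  obtain ⟨w, hw⟩ := h
  have w' : (eA.inv ≫ f ≫ eB.hom) ≫ (eB.inv ≫ g ≫ eD.hom) = 0 := by
    simp [reassoc_of% w]
  exact ⟨w', ShortComplex.shortExact_of_iso
    (ShortComplex.isoMk (S₁ := ShortComplex.mk f g w) (S₂ := ShortComplex.mk _ _ w')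
      eA eB eD (by simp) (by simp)) hw⟩

theorem isSES_biprod_map {A B D A' B' D' : C} {f : A ⟶ B} {g : B ⟶ D}
    {f' : A' ⟶ B'} {g' : B' ⟶ D'} (h : IsSES C f g) (h' : IsSES C f' g') :
    IsSES C (biprod.map f f') (biprod.map g g') := by
  obtain ⟨w, hw⟩ := h
  obtain ⟨w', hw'⟩ := h'
  haveI : Mono f := hw.mono_f
  haveI : Epi g := hw.epi_g
  haveI : Mono f' := hw'.mono_f
  haveI : Epi g' := hw'.epi_g
  have wm : biprod.map f f' ≫ biprod.map g g' = 0 := by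
    ext <;> simp [reassoc_of% w, reassoc_of% w']
  refine ⟨wm, ShortComplex.ShortExact.mk' ?_ inferInstance inferInstance⟩
  apply ShortComplex.exact_of_f_is_kernel
  refine KernelFork.IsLimit.ofι' _ _ (fun {Z} k hk => ?_)
  have hk1 : (k ≫ biprod.fst) ≫ g = 0 := by
    rw [Category.assoc, ← biprod.map_fst, ← Category.assoc, hk, zero_comp]
  have hk2 : (k ≫ biprod.snd) ≫ g' = 0 := by
    rw [Category.assoc, ← biprod.map_snd, ← Category.assoc, hk, zero_comp]
  refine ⟨biprod.lift (hw.exact.lift _ hk1) (hw'.exact.lift _ hk2), ?_⟩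
  ext
  · simpa using hw.exact.lift_f (k ≫ biprod.fst) hk1
  · simpa using hw'.exact.lift_f (k ≫ biprod.snd) hk2

theorem mk_eq_of_iso {A B : C} (e : A ≅ B) : K0.mk C A = K0.mk C B := by
  have h : isoCl C A = isoCl C B := Quotient.sound ⟨e⟩
  unfold K0.mk; rw [h]

theorem mk_relation {A B D : C} {f : A ⟶ B} {g : B ⟶ D} (h : IsSES C f g) :
    K0.mk C B = K0.mk C A + K0.mk C D := by
  obtain ⟨w, hw⟩ := h
  have hmem : FreeAbelianGroup.of (isoCl C A) - FreeAbelianGroup.of (isoCl C B)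
      + FreeAbelianGroup.of (isoCl C D) ∈ K0Rels C :=
    AddSubgroup.subset_closure ⟨ShortComplex.mk f g w, hw, rfl⟩
  have h0 := (QuotientAddGroup.eq_zero_iff (N := K0Rels C) _).2 hmem
  rw [QuotientAddGroup.mk_add, QuotientAddGroup.mk_sub] at h0
  change K0.mk C A - K0.mk C B + K0.mk C D = 0 at h0
  rw [sub_add_eq_add_sub, sub_eq_zero] at h0
  exact h0.symm

theorem mk_zero_obj : K0.mk C (0 : C) = 0 := by
  have h := mk_relation (isSES_id_zero (0 : C))
  exact (left_eq_add.mp h)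

theorem mk_biprod (A B : C) : K0.mk C (A ⊞ B) = K0.mk C A + K0.mk C B :=
  mk_relation (isSES_inl_snd A B)

/-- The Heller relation: `P` and `X` become isomorphic after adding middle terms of two
short exact sequences with the same ends. -/
def Rel (P X : C) : Prop :=
  ∃ (U W V₁ V₂ : C) (f₁ : U ⟶ V₁) (g₁ : V₁ ⟶ W) (f₂ : U ⟶ V₂) (g₂ : V₂ ⟶ W),
    IsSES C f₁ g₁ ∧ IsSES C f₂ g₂ ∧ Nonempty ((P ⊞ V₂) ≅ (X ⊞ V₁))

theorem Rel.of_iso {P X : C} (e : P ≅ X) : Rel P X :=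
  ⟨0, 0, 0, 0, 𝟙 0, 0, 𝟙 0, 0, isSES_id_zero 0, isSES_id_zero 0,
    ⟨biprod.mapIso e (Iso.refl 0)⟩⟩

theorem Rel.symm {P X : C} (h : Rel P X) : Rel X P := by
  obtain ⟨U, W, V₁, V₂, f₁, g₁, f₂, g₂, h₁, h₂, ⟨i⟩⟩ := h
  exact ⟨U, W, V₂, V₁, f₂, g₂, f₁, g₁, h₂, h₁, ⟨i.symm⟩⟩

theorem Rel.congr {P X P' X' : C} (h : Rel P X) (eP : P ≅ P') (eX : X ≅ X') :
    Rel P' X' := by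
  obtain ⟨U, W, V₁, V₂, f₁, g₁, f₂, g₂, h₁, h₂, ⟨i⟩⟩ := h
  exact ⟨U, W, V₁, V₂, f₁, g₁, f₂, g₂, h₁, h₂,
    ⟨biprod.mapIso eP.symm (Iso.refl _) ≪≫ i ≪≫ biprod.mapIso eX (Iso.refl _)⟩⟩

/-- Interchange isomorphism for biproducts. -/
noncomputable def interchange (A B D E : C) : (A ⊞ B) ⊞ (D ⊞ E) ≅ (A ⊞ D) ⊞ (B ⊞ E) :=
  biprod.associator A B (D ⊞ E) ≪≫
    biprod.mapIso (Iso.refl A) ((biprod.associator B D E).symm ≪≫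
      biprod.mapIso (biprod.braiding B D) (Iso.refl E) ≪≫ biprod.associator D B E) ≪≫
    (biprod.associator A D (B ⊞ E)).symm

theorem Rel.add {P X P' X' : C} (h : Rel P X) (h' : Rel P' X') :
    Rel (P ⊞ P') (X ⊞ X') := by
  obtain ⟨U, W, V₁, V₂, f₁, g₁, f₂, g₂, h₁, h₂, ⟨i⟩⟩ := h
  obtain ⟨U', W', V₁', V₂', f₁', g₁', f₂', g₂', h₁', h₂', ⟨i'⟩⟩ := h'
  exact ⟨U ⊞ U', W ⊞ W', V₁ ⊞ V₁', V₂ ⊞ V₂', biprod.map f₁ f₁', biprod.map g₁ g₁',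
    biprod.map f₂ f₂', biprod.map g₂ g₂', isSES_biprod_map h₁ h₁', isSES_biprod_map h₂ h₂',
    ⟨interchange P P' V₂ V₂' ≪≫ biprod.mapIso i i' ≪≫ interchange X V₁ X' V₁'⟩⟩

theorem Rel.cancel {P X R : C} (h : Rel (P ⊞ R) (X ⊞ R)) : Rel P X := by
  obtain ⟨U, W, V₁, V₂, f₁, g₁, f₂, g₂, h₁, h₂, ⟨i⟩⟩ := h
  refine ⟨U ⊞ R, W ⊞ (0 : C), V₁ ⊞ R, V₂ ⊞ R, biprod.map f₁ (𝟙 R), biprod.map g₁ 0,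
    biprod.map f₂ (𝟙 R), biprod.map g₂ 0,
    isSES_biprod_map h₁ (isSES_id_zero R), isSES_biprod_map h₂ (isSES_id_zero R), ⟨?_⟩⟩
  calc P ⊞ (V₂ ⊞ R) ≅ P ⊞ (R ⊞ V₂) := biprod.mapIso (Iso.refl P) (biprod.braiding V₂ R)
    _ ≅ (P ⊞ R) ⊞ V₂ := (biprod.associator P R V₂).symm
    _ ≅ (X ⊞ R) ⊞ V₁ := i
    _ ≅ X ⊞ (R ⊞ V₁) := biprod.associator X R V₁
    _ ≅ X ⊞ (V₁ ⊞ R) := biprod.mapIso (Iso.refl X) (biprod.braiding R V₁)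

theorem Rel.trans {A B E : C} (h : Rel A B) (h' : Rel B E) : Rel A E := by
  obtain ⟨U, W, V₁, V₂, f₁, g₁, f₂, g₂, h₁, h₂, ⟨i⟩⟩ := h
  obtain ⟨U', W', V₁', V₂', f₁', g₁', f₂', g₂', h₁', h₂', ⟨i'⟩⟩ := h'
  refine ⟨U ⊞ U', W ⊞ W', V₁ ⊞ V₁', V₂ ⊞ V₂', biprod.map f₁ f₁', biprod.map g₁ g₁',
    biprod.map f₂ f₂', biprod.map g₂ g₂', isSES_biprod_map h₁ h₁', isSES_biprod_map h₂ h₂', ⟨?_⟩⟩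
  calc A ⊞ (V₂ ⊞ V₂') ≅ (A ⊞ V₂) ⊞ V₂' := (biprod.associator A V₂ V₂').symm
    _ ≅ (B ⊞ V₁) ⊞ V₂' := biprod.mapIso i (Iso.refl _)
    _ ≅ B ⊞ (V₁ ⊞ V₂') := biprod.associator B V₁ V₂'
    _ ≅ B ⊞ (V₂' ⊞ V₁) := biprod.mapIso (Iso.refl B) (biprod.braiding V₁ V₂')
    _ ≅ (B ⊞ V₂') ⊞ V₁ := (biprod.associator B V₂' V₁).symm
    _ ≅ (E ⊞ V₁') ⊞ V₁ := biprod.mapIso i' (Iso.refl _)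
    _ ≅ E ⊞ (V₁' ⊞ V₁) := biprod.associator E V₁' V₁
    _ ≅ E ⊞ (V₁ ⊞ V₁') := biprod.mapIso (Iso.refl E) (biprod.braiding V₁' V₁)

theorem Rel.euler {A B D : C} {f : A ⟶ B} {g : B ⟶ D} (h : IsSES C f g) :
    Rel (A ⊞ D) B :=
  ⟨A, D, A ⊞ D, B, biprod.inl, biprod.snd, f, g, isSES_inl_snd A D, h,
    ⟨biprod.braiding (A ⊞ D) B⟩⟩

/-- `0 ⊞ A ≅ A`. -/
noncomputable def b0z (A : C) : (0 : C) ⊞ A ≅ A := (isoZeroBiprod (isZero_zero C)).symm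

/-- `A ⊞ 0 ≅ A`. -/
noncomputable def bz0 (A : C) : A ⊞ (0 : C) ≅ A := biprod.braiding A 0 ≪≫ b0z A

end Helpers

section GG

variable (C : Type u) [Category.{v} C] [Abelian C]

/-- The setoid on pairs of objects used to construct the group detecting `K0`-classes. -/
def pairSetoid : Setoid (C × C) where
  r p q := Rel (p.1 ⊞ q.2) (q.1 ⊞ p.2)
  iseqv := by
    constructor
    · intro p; exact Rel.of_iso (Iso.refl _)
    · intro p q h
      exact Rel.symm h
    · intro p q r h1 h2
      have h3 := h1.add h2
      have h4 := h3.congr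
        (biprod.mapIso (Iso.refl _) (biprod.braiding _ _) ≪≫ interchange _ _ _ _ ≪≫
          biprod.mapIso (Iso.refl _) (biprod.braiding _ _))
        (interchange _ _ _ _ ≪≫ biprod.mapIso (biprod.braiding _ _) (Iso.refl _) ≪≫
          interchange _ _ _ _)
      exact h4.cancel

/-- The auxiliary group of pairs of objects modulo stable relation. -/
def GG : Type u := Quotient (pairSetoid C)

/-- Constructor for `GG`. -/
def GG.mk (p : C × C) : GG C := Quotient.mk (pairSetoid C) p

theorem GG.sound {p q : C × C} (h : Rel (p.1 ⊞ q.2) (q.1 ⊞ p.2)) : GG.mk C p = GG.mk C q :=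
  Quotient.sound h

theorem GG.exact {p q : C × C} (h : GG.mk C p = GG.mk C q) : Rel (p.1 ⊞ q.2) (q.1 ⊞ p.2) :=
  Quotient.exact h

noncomputable instance : Add (GG C) :=
  ⟨Quotient.map₂ (fun p q => (p.1 ⊞ q.1, p.2 ⊞ q.2)) (by
    rintro ⟨p1, p2⟩ ⟨q1, q2⟩ hpq ⟨a1, a2⟩ ⟨b1, b2⟩ hab
    have h := (hpq.add hab : Rel ((p1 ⊞ q2) ⊞ (a1 ⊞ b2)) ((q1 ⊞ p2) ⊞ (b1 ⊞ a2)))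
    exact h.congr (interchange _ _ _ _) (interchange _ _ _ _))⟩

noncomputable instance : Zero (GG C) := ⟨GG.mk C (0, 0)⟩

noncomputable instance : Neg (GG C) :=
  ⟨Quotient.map (fun p => (p.2, p.1)) (by
    rintro ⟨p1, p2⟩ ⟨q1, q2⟩ h
    exact h.symm.congr (biprod.braiding _ _) (biprod.braiding _ _))⟩

noncomputable instance : AddCommGroup (GG C) where
  add := (· + ·)
  zero := 0
  neg := Neg.neg
  add_assoc := by
    rintro ⟨⟨a1, a2⟩⟩ ⟨⟨b1, b2⟩⟩ ⟨⟨c1, c2⟩⟩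
    exact Quotient.sound (Rel.of_iso
      (biprod.mapIso (biprod.associator a1 b1 c1) (biprod.associator a2 b2 c2).symm))
  zero_add := by
    rintro ⟨⟨a1, a2⟩⟩
    exact Quotient.sound (Rel.of_iso (biprod.mapIso (b0z a1) (b0z a2).symm))
  add_zero := by
    rintro ⟨⟨a1, a2⟩⟩
    exact Quotient.sound (Rel.of_iso (biprod.mapIso (bz0 a1) (bz0 a2).symm))
  add_comm := by
    rintro ⟨⟨a1, a2⟩⟩ ⟨⟨b1, b2⟩⟩
    exact Quotient.sound (Rel.of_iso
      (biprod.mapIso (biprod.braiding a1 b1) (biprod.braiding b2 a2)))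
  neg_add_cancel := by
    rintro ⟨⟨a1, a2⟩⟩
    refine Quotient.sound (Rel.of_iso ?_)
    exact bz0 (a2 ⊞ a1) ≪≫ biprod.braiding a2 a1 ≪≫ (b0z (a1 ⊞ a2)).symm
  nsmul := nsmulRec
  zsmul := zsmulRec

theorem GG.mk_add (p q : C × C) :
    GG.mk C p + GG.mk C q = GG.mk C (p.1 ⊞ q.1, p.2 ⊞ q.2) := rfl

theorem GG.neg_mk (p : C × C) : -GG.mk C p = GG.mk C (p.2, p.1) := rfl

theorem GG.zero_def : (0 : GG C) = GG.mk C (0, 0) := rfl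

/-- The canonical map from `K0` to `GG`. -/
noncomputable def toGG : K0 C →+ GG C :=
  QuotientAddGroup.lift (K0Rels C)
    (FreeAbelianGroup.lift (Quotient.lift (fun A => GG.mk C (A, 0)) (by
      rintro A B ⟨e⟩
      exact GG.sound C (Rel.of_iso (biprod.mapIso e (Iso.refl _))))))
    (by
      refine (AddSubgroup.closure_le _).2 ?_
      rintro x ⟨S, hS, rfl⟩
      have hses : IsSES C S.f S.g := ⟨S.zero, hS⟩
      have he : Rel (S.X₁ ⊞ S.X₃) S.X₂ := Rel.euler hses
      simp only [SetLike.mem_coe, AddMonoidHom.mem_ker, map_add, map_sub,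
        FreeAbelianGroup.lift_apply_of]
      rw [map_add, map_sub, FreeAbelianGroup.lift_apply_of, FreeAbelianGroup.lift_apply_of,
        FreeAbelianGroup.lift_apply_of]
      show GG.mk C (S.X₁, 0) - GG.mk C (S.X₂, 0) + GG.mk C (S.X₃, 0) = 0
      rw [sub_eq_add_neg]
      exact GG.sound C (p := ((S.X₁ ⊞ 0) ⊞ S.X₃, (0 ⊞ S.X₂) ⊞ 0)) (q := (0, 0))
        (he.congr
          (bz0 ((S.X₁ ⊞ 0) ⊞ S.X₃) ≪≫ biprod.mapIso (bz0 S.X₁) (Iso.refl S.X₃)).symm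
          (b0z ((0 ⊞ S.X₂) ⊞ 0) ≪≫ bz0 (0 ⊞ S.X₂) ≪≫ b0z S.X₂).symm))

theorem toGG_mk (A : C) : toGG C (K0.mk C A) = GG.mk C (A, 0) := by
  show QuotientAddGroup.lift _ _ _ (QuotientAddGroup.mk _) = _
  erw [QuotientAddGroup.lift_mk']
  exact FreeAbelianGroup.lift_apply_of _ _

theorem rel_of_mk_eq {A B : C} (h : K0.mk C A = K0.mk C B) : Rel A B := by
  have h2 := congrArg (toGG C) h
  rw [toGG_mk, toGG_mk] at h2
  have h3 := GG.exact C h2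
  exact h3.congr (bz0 A) (bz0 B)

end GG


section Main

variable {C : Type u} [Category.{v} C] [Abelian C]

theorem k0_exists_rep (x : K0 C) : ∃ A B : C, x = K0.mk C A - K0.mk C B := by
  obtain ⟨y, rfl⟩ := QuotientAddGroup.mk_surjective
    (x : FreeAbelianGroup (Quotient (isIsomorphicSetoid C)) ⧸ K0Rels C)
  refine FreeAbelianGroup.induction_on y ?_ ?_ ?_ ?_
  · exact ⟨0, 0, by rw [mk_zero_obj, sub_zero]; rfl⟩
  · intro x
    obtain ⟨A, rfl⟩ := Quotient.exists_rep x
    exact ⟨A, 0, by rw [mk_zero_obj, sub_zero]; rfl⟩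
  · rintro x ⟨A, B, e⟩
    exact ⟨B, A, by rw [QuotientAddGroup.mk_neg, e]; exact neg_sub _ _⟩
  · rintro x y ⟨A, B, e⟩ ⟨A', B', e'⟩
    refine ⟨A ⊞ A', B ⊞ B', ?_⟩
    rw [QuotientAddGroup.mk_add, e, e', mk_biprod, mk_biprod]
    abel

theorem closure_elem {S : Set C} (h0 : (0 : C) ∈ S)
    (hsum : ∀ A B : C, A ∈ S → B ∈ S → (A ⊞ B) ∈ S) {x : K0 C}
    (hx : x ∈ AddSubgroup.closure (K0.mk C '' S)) :
    ∃ A ∈ S, ∃ B ∈ S, x = K0.mk C A - K0.mk C B := by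
  let T : AddSubgroup (K0 C) :=
    { carrier := {x | ∃ A ∈ S, ∃ B ∈ S, x = K0.mk C A - K0.mk C B}
      zero_mem' := ⟨0, h0, 0, h0, by simp⟩
      add_mem' := by
        rintro a b ⟨A, hA, B, hB, rfl⟩ ⟨A', hA', B', hB', rfl⟩
        refine ⟨A ⊞ A', hsum _ _ hA hA', B ⊞ B', hsum _ _ hB hB', ?_⟩
        rw [mk_biprod, mk_biprod]
        abel
      neg_mem' := by
        rintro a ⟨A, hA, B, hB, rfl⟩
        exact ⟨B, hB, A, hA, by rw [neg_sub]⟩ }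
  exact (AddSubgroup.closure_le T).2 (by
    rintro z ⟨A, hA, rfl⟩
    exact ⟨A, hA, 0, h0, by rw [mk_zero_obj, sub_zero]⟩) hx

theorem mem_of_mk_eq {S : Set C} (hDense : DenseSub C S) (hComp : CompleteSub C S)
    (h0 : (0 : C) ∈ S) {P X : C} (hX : X ∈ S) (h : K0.mk C P = K0.mk C X) : P ∈ S := by
  have hiso : ∀ {A B : C}, (A ≅ B) → A ∈ S → B ∈ S := fun {A B} e hA =>
    (hComp _ _ (isSES_zero_iso e)).1 h0 hA
  have hsum : ∀ A B : C, A ∈ S → B ∈ S → (A ⊞ B) ∈ S := fun A B hA hB =>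
    (hComp _ _ (isSES_inl_snd A B)).2.1 hA hB
  obtain ⟨U, W, V₁, V₂, f₁, g₁, f₂, g₂, h₁, h₂, ⟨i⟩⟩ := rel_of_mk_eq C h
  obtain ⟨TU, hTU, U', ⟨eU⟩⟩ := hDense U
  obtain ⟨TW, hTW, W', ⟨eW⟩⟩ := hDense W
  have build : ∀ (V : C) (f : U ⟶ V) (g : V ⟶ W), IsSES C f g → ((V ⊞ U') ⊞ W') ∈ S := by
    intro V f g hs
    have s1 := isSES_biprod_map (isSES_biprod_map hs (isSES_id_zero U'))
      (isSES_zero_iso (Iso.refl W'))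
    have s2 := isSES_of_iso s1 (bz0 (U ⊞ U') ≪≫ eU.symm) (Iso.refl ((V ⊞ U') ⊞ W'))
      (biprod.mapIso (bz0 W) (Iso.refl W') ≪≫ eW.symm)
    exact (hComp _ _ s2).2.1 hTU hTW
  have hV1 : ((V₁ ⊞ U') ⊞ W') ∈ S := build V₁ f₁ g₁ h₁
  have hV2 : ((V₂ ⊞ U') ⊞ W') ∈ S := build V₂ f₂ g₂ h₂
  have k : ∀ Y Z : C, Y ⊞ ((Z ⊞ U') ⊞ W') ≅ (Y ⊞ Z) ⊞ (U' ⊞ W') := fun Y Z =>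
    biprod.mapIso (Iso.refl Y) (biprod.associator Z U' W') ≪≫
      (biprod.associator Y Z (U' ⊞ W')).symm
  have j : P ⊞ ((V₂ ⊞ U') ⊞ W') ≅ X ⊞ ((V₁ ⊞ U') ⊞ W') :=
    k P V₂ ≪≫ biprod.mapIso i (Iso.refl (U' ⊞ W')) ≪≫ (k X V₁).symm
  have hmid : (P ⊞ ((V₂ ⊞ U') ⊞ W')) ∈ S := hiso j.symm (hsum _ _ hX hV1)
  exact (hComp _ _ (isSES_inl_snd P ((V₂ ⊞ U') ⊞ W'))).2.2 hmid hV2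

end Main

end AbK0

/-- Matsui's classification (cogenerator case): `H ↦ f(H) = {A | [A] ∈ H}` and
`S ↦ g(S) = ⟨[A] : A ∈ S⟩` are mutually inverse bijections between subgroups of
`K₀(C)` containing `H_𝒢` and dense complete full subcategories of `C` containing `𝒢`. -/
theorem classification_cogenerator
    (C : Type u) [Category.{v} C] [Abelian C] [EssentiallySmall.{w} C]
    (G : Set C) (hG : IsCogenerator C G) :
    (∀ H : AddSubgroup (K0 C), AddSubgroup.closure (K0.mk C '' G) ≤ H →
      (G ⊆ {A : C | K0.mk C A ∈ H} ∧
       DenseSub C {A : C | K0.mk C A ∈ H} ∧ CompleteSub C {A : C | K0.mk C A ∈ H} ∧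
       AddSubgroup.closure (K0.mk C '' {A : C | K0.mk C A ∈ H}) = H)) ∧
    (∀ S : Set C, DenseSub C S → CompleteSub C S → G ⊆ S →
      (AddSubgroup.closure (K0.mk C '' G) ≤ AddSubgroup.closure (K0.mk C '' S) ∧
       {A : C | K0.mk C A ∈ AddSubgroup.closure (K0.mk C '' S)} = S)) := by
  obtain ⟨⟨hG0, hGsum⟩, hGco⟩ := hG
  constructor
  · intro H hH
    have hGsub : G ⊆ {A : C | K0.mk C A ∈ H} := fun A hA =>
      hH (AddSubgroup.subset_closure ⟨A, hA, rfl⟩)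
    refine ⟨hGsub, ?_, ?_, ?_⟩
    · intro A
      obtain ⟨Gb, A', f, g, hGb, hses⟩ := hGco A
      refine ⟨A ⊞ A', ?_, A', ⟨Iso.refl _⟩⟩
      show K0.mk C (A ⊞ A') ∈ H
      rw [mk_biprod, ← mk_relation hses]
      exact hGsub hGb
    · intro A B D f g hses
      have e := mk_relation hses
      refine ⟨fun hA hB => ?_, fun hA hD => ?_, fun hB hD => ?_⟩
      · show K0.mk C D ∈ H
        have e2 : K0.mk C D = K0.mk C B - K0.mk C A := by rw [e]; abel
        rw [e2]; exact sub_mem hB hA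
      · show K0.mk C B ∈ H
        rw [e]; exact add_mem hA hD
      · show K0.mk C A ∈ H
        have e2 : K0.mk C A = K0.mk C B - K0.mk C D := by rw [e]; abel
        rw [e2]; exact sub_mem hB hD
    · apply le_antisymm
      · refine (AddSubgroup.closure_le _).2 ?_
        rintro z ⟨A, hA, rfl⟩
        exact hA
      · intro x hx
        obtain ⟨A, B, rfl⟩ := k0_exists_rep x
        obtain ⟨Gb, B', f, g, hGb, hses⟩ := hGco B
        have hGbH : K0.mk C Gb ∈ H := hGsub hGb
        have e : K0.mk C Gb = K0.mk C B + K0.mk C B' := mk_relation hses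
        have e2 : K0.mk C (A ⊞ B') = (K0.mk C A - K0.mk C B) + K0.mk C Gb := by
          rw [mk_biprod, e]; abel
        have hAB' : K0.mk C (A ⊞ B') ∈ H := by rw [e2]; exact add_mem hx hGbH
        have e3 : K0.mk C A - K0.mk C B = K0.mk C (A ⊞ B') - K0.mk C Gb := by
          rw [e2]; abel
        rw [e3]
        exact sub_mem (AddSubgroup.subset_closure ⟨A ⊞ B', hAB', rfl⟩)
          (AddSubgroup.subset_closure ⟨Gb, hGbH, rfl⟩)
  · intro S hDense hComp hGS
    have h0S : (0 : C) ∈ S := hGS hG0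
    have hsum : ∀ A B : C, A ∈ S → B ∈ S → (A ⊞ B) ∈ S := fun A B hA hB =>
      (hComp _ _ (isSES_inl_snd A B)).2.1 hA hB
    refine ⟨AddSubgroup.closure_mono (Set.image_mono hGS), ?_⟩
    ext A
    simp only [Set.mem_setOf_eq]
    constructor
    · intro hA
      obtain ⟨X, hX, Y, hY, e⟩ := closure_elem h0S hsum hA
      have e2 : K0.mk C (A ⊞ Y) = K0.mk C X := by
        rw [mk_biprod, e]; abel
      have hAY : (A ⊞ Y) ∈ S := mem_of_mk_eq hDense hComp h0S hX e2
      exact (hComp _ _ (isSES_inl_snd A Y)).2.2 hAY hY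
    · intro hA
      exact AddSubgroup.subset_closure ⟨A, hA, rfl⟩
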